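/- arXiv:1806.07422 — 2 statements merged into one kernel-verified Lean document; each statement's English description precedes it below -/
import Mathlib

section
/- Conditional exchangeability given X implies conditional exchangeability given the propensity score: if (Y(a'))_{a'} ⊥ A | X, then for each fixed a ∈ {0,1}^n, the random variable Y(a) is conditionally independent of the event {A = a} given the scalar propensity score e(X) := P(A = a | X). In particular E[Y(a) | A = a, e(X)] = E[Y(a) | e(X)] a.s. on {P(A=a | e(X)) > 0}. -/
open MeasureTheory Filter

/-- Conditional exchangeability given `X` implies conditional exchangeability
given the scalar propensity score `e(X) = P(A = a | X)`: for fixed `a`, the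
potential outcome `Y(a)` and the event `{A = a}` factor conditionally on
`σ(e(X))`, i.e. `E[1{A=a} Y(a) | e(X)] = P(A=a | e(X)) · E[Y(a) | e(X)]` a.s.
(the interference analogue of the Rosenbaum–Rubin balancing property). -/
theorem propensity_score_balancing
    {Ω 𝒳 : Type*} [MeasurableSpace Ω] [MeasurableSpace 𝒳]
    (μ : Measure Ω) [IsProbabilityMeasure μ]
    (n : ℕ) (A : Ω → (Fin n → Fin 2)) (hA : Measurable A)
    (X : Ω → 𝒳) (hX : Measurable X)
    (Y : (Fin n → Fin 2) → Ω → ℝ)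
    (hYmeas : ∀ a', Measurable (Y a'))
    (hYint : ∀ a', Integrable (Y a') μ)
    -- propensity score `fA a' = P(A = a' | X)`
    (fA : (Fin n → Fin 2) → Ω → ℝ)
    (hfA : ∀ a', fA a'
      =ᵐ[μ] μ[(A ⁻¹' {a'}).indicator (fun _ => (1:ℝ)) | MeasurableSpace.comap X inferInstance])
    (hfA_meas : ∀ a', Measurable (fA a'))
    (hpos : ∀ a', ∀ᵐ ω ∂μ, 0 < fA a' ω)
    -- conditional exchangeability: (Y(a''))_{a''} ⫫ A | X
    (hexch : ∀ a' a'',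
      μ[fun ω => (A ⁻¹' {a'}).indicator (fun _ => (1:ℝ)) ω * Y a'' ω
          | MeasurableSpace.comap X inferInstance]
        =ᵐ[μ] fun ω => fA a' ω *
          (μ[Y a'' | MeasurableSpace.comap X inferInstance]) ω)
    (a : Fin n → Fin 2) :
    -- conditional independence of `Y(a)` and `{A = a}` given `e(X) = fA a`
    μ[fun ω => (A ⁻¹' {a}).indicator (fun _ => (1:ℝ)) ω * Y a ω
        | MeasurableSpace.comap (fA a) inferInstance]
      =ᵐ[μ] fun ω =>
        (μ[(A ⁻¹' {a}).indicator (fun _ => (1:ℝ))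
            | MeasurableSpace.comap (fA a) inferInstance]) ω *
        (μ[Y a | MeasurableSpace.comap (fA a) inferInstance]) ω := by
  classical
  have hmX : MeasurableSpace.comap X inferInstance ≤ ‹MeasurableSpace Ω› := hX.comap_le
  have hme : MeasurableSpace.comap (fA a) inferInstance ≤ ‹MeasurableSpace Ω› :=
    (hfA_meas a).comap_le
  set I : Ω → ℝ := (A ⁻¹' {a}).indicator (fun _ => (1:ℝ)) with hIdef
  have hAs : MeasurableSet (A ⁻¹' {a}) := hA (measurableSet_singleton a)
  have hImeas : Measurable I := measurable_const.indicator hAs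
  have hIint : Integrable I μ := (integrable_const (1:ℝ)).indicator hAs
  have hIbound : ∀ ω, ‖I ω‖ ≤ 1 := by
    intro ω
    by_cases h : ω ∈ A ⁻¹' {a} <;> simp [hIdef, Set.indicator_apply, h]
  -- g is the σ(X)-measurable version of the propensity score
  set g : Ω → ℝ := μ[I | (MeasurableSpace.comap X inferInstance)] with hgdef
  have hgsm : StronglyMeasurable[(MeasurableSpace.comap X inferInstance)] g := stronglyMeasurable_condExp
  have hfg : fA a =ᵐ[μ] g := hfA a
  have hfAint : Integrable (fA a) μ := integrable_condExp.congr hfg.symm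
  -- the propensity score is a.e. bounded by 1
  have hfbd : ∀ᵐ ω ∂μ, ‖fA a ω‖ ≤ 1 := by
    have h0 : (0 : Ω → ℝ) ≤ᵐ[μ] g :=
      condExp_nonneg (Eventually.of_forall fun ω => by
        by_cases h : ω ∈ A ⁻¹' {a} <;> simp [hIdef, Set.indicator_apply, h])
    have h1 : g ≤ᵐ[μ] μ[(fun _ => (1:ℝ)) | (MeasurableSpace.comap X inferInstance)] :=
      condExp_mono hIint (integrable_const 1)
        (Eventually.of_forall fun ω => by
          by_cases h : ω ∈ A ⁻¹' {a} <;> simp [hIdef, Set.indicator_apply, h])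
    filter_upwards [hfg, h0, h1] with ω h1' h2' h3'
    have h2'' : (0:ℝ) ≤ g ω := h2'
    have h4 : g ω ≤ 1 := by
      simpa [condExp_const hmX (1:ℝ)] using h3'
    rw [h1', Real.norm_eq_abs, abs_le]
    exact ⟨by linarith, h4⟩
  have hfame : Measurable[(MeasurableSpace.comap (fA a) inferInstance)] (fA a) := measurable_iff_comap_le.mpr le_rfl
  -- various integrability facts
  have hIYint : Integrable (fun ω => I ω * Y a ω) μ :=
    (hYint a).bdd_mul hImeas.aestronglyMeasurable (Eventually.of_forall hIbound)
  have hfAYint : Integrable (fun ω => fA a ω * Y a ω) μ :=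
    (hYint a).bdd_mul (hfA_meas a).aestronglyMeasurable hfbd
  have hgYint : Integrable (fun ω => g ω * Y a ω) μ :=
    hfAYint.congr (hfg.mono fun ω hω => by dsimp only; rw [hω])
  -- pull-out property at the level of σ(X)
  have hpullX : μ[(fun ω => g ω * Y a ω) | (MeasurableSpace.comap X inferInstance)] =ᵐ[μ] fun ω => g ω * (μ[Y a | (MeasurableSpace.comap X inferInstance)]) ω :=
    condExp_mul_of_stronglyMeasurable_left hgsm hgYint (hYint a)
  -- pull-out property at the level of σ(e(X))
  have hpullme : μ[(fun ω => fA a ω * Y a ω) | (MeasurableSpace.comap (fA a) inferInstance)] =ᵐ[μ] fun ω => fA a ω * (μ[Y a | (MeasurableSpace.comap (fA a) inferInstance)]) ω :=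
    condExp_mul_of_stronglyMeasurable_left hfame.stronglyMeasurable hfAYint (hYint a)
  -- a.e.-equality of preimage sets under fA a and g
  have hset : ∀ t : Set ℝ, (fA a ⁻¹' t : Set Ω) =ᵐ[μ] (g ⁻¹' t : Set Ω) := by
    intro t
    filter_upwards [hfg] with ω hω
    show (fA a ω ∈ t) = (g ω ∈ t)
    rw [hω]
  -- Step (**): fA a is a version of P(A = a | e(X))
  have hstar2 : fA a =ᵐ[μ] μ[I | (MeasurableSpace.comap (fA a) inferInstance)] := by
    refine ae_eq_condExp_of_forall_setIntegral_eq hme hIint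
      (fun s _ _ => hfAint.integrableOn) ?_
      ⟨fA a, hfame.stronglyMeasurable, EventuallyEq.rfl⟩
    rintro s ⟨t, ht, rfl⟩ -
    have hs' : MeasurableSet[(MeasurableSpace.comap X inferInstance)] (g ⁻¹' t) := hgsm.measurable ht
    calc ∫ ω in fA a ⁻¹' t, fA a ω ∂μ
        = ∫ ω in g ⁻¹' t, fA a ω ∂μ := setIntegral_congr_set (hset t)
      _ = ∫ ω in g ⁻¹' t, g ω ∂μ := integral_congr_ae (ae_restrict_of_ae hfg)
      _ = ∫ ω in g ⁻¹' t, I ω ∂μ := setIntegral_condExp hmX hIint hs'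
      _ = ∫ ω in fA a ⁻¹' t, I ω ∂μ := (setIntegral_congr_set (hset t)).symm
  -- Step (*): E[1_{A=a} Y(a) | e(X)] = fA a * E[Y(a) | e(X)]
  have hstar1 : (fun ω => fA a ω * (μ[Y a | (MeasurableSpace.comap (fA a) inferInstance)]) ω)
      =ᵐ[μ] μ[(fun ω => I ω * Y a ω) | (MeasurableSpace.comap (fA a) inferInstance)] := by
    refine ae_eq_condExp_of_forall_setIntegral_eq hme hIYint
      (fun s _ _ => (integrable_condExp.bdd_mul (hfA_meas a).aestronglyMeasurable
        hfbd).integrableOn) ?_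
      ⟨fun ω => fA a ω * (μ[Y a | (MeasurableSpace.comap (fA a) inferInstance)]) ω,
        hfame.stronglyMeasurable.mul stronglyMeasurable_condExp,
        EventuallyEq.rfl⟩
    rintro s ⟨t, ht, rfl⟩ -
    have hs' : MeasurableSet[(MeasurableSpace.comap X inferInstance)] (g ⁻¹' t) := hgsm.measurable ht
    calc ∫ ω in fA a ⁻¹' t, fA a ω * (μ[Y a | (MeasurableSpace.comap (fA a) inferInstance)]) ω ∂μ
        = ∫ ω in fA a ⁻¹' t, (μ[(fun ω => fA a ω * Y a ω) | (MeasurableSpace.comap (fA a) inferInstance)]) ω ∂μ :=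
          (integral_congr_ae (ae_restrict_of_ae hpullme)).symm
      _ = ∫ ω in fA a ⁻¹' t, fA a ω * Y a ω ∂μ :=
          setIntegral_condExp hme hfAYint ⟨t, ht, rfl⟩
      _ = ∫ ω in g ⁻¹' t, fA a ω * Y a ω ∂μ := setIntegral_congr_set (hset t)
      _ = ∫ ω in g ⁻¹' t, g ω * Y a ω ∂μ :=
          integral_congr_ae (ae_restrict_of_ae (hfg.mono fun ω hω => by dsimp only; rw [hω]))
      _ = ∫ ω in g ⁻¹' t, (μ[(fun ω => g ω * Y a ω) | (MeasurableSpace.comap X inferInstance)]) ω ∂μ :=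
          (setIntegral_condExp hmX hgYint hs').symm
      _ = ∫ ω in g ⁻¹' t, g ω * (μ[Y a | (MeasurableSpace.comap X inferInstance)]) ω ∂μ :=
          integral_congr_ae (ae_restrict_of_ae hpullX)
      _ = ∫ ω in g ⁻¹' t, fA a ω * (μ[Y a | (MeasurableSpace.comap X inferInstance)]) ω ∂μ :=
          integral_congr_ae (ae_restrict_of_ae (hfg.mono fun ω hω => by dsimp only; rw [hω]))
      _ = ∫ ω in g ⁻¹' t, (μ[(fun ω => I ω * Y a ω) | (MeasurableSpace.comap X inferInstance)]) ω ∂μ :=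
          (integral_congr_ae (ae_restrict_of_ae (hexch a a))).symm
      _ = ∫ ω in g ⁻¹' t, I ω * Y a ω ∂μ := setIntegral_condExp hmX hIYint hs'
      _ = ∫ ω in fA a ⁻¹' t, I ω * Y a ω ∂μ := (setIntegral_congr_set (hset t)).symm
  -- combine
  filter_upwards [hstar1, hstar2] with ω h1 h2
  rw [← h1, h2]
end

section
/- Propensity-score-based identification of μ_{aα}: under conditional exchangeability and positivity, μ_{aα} = ∑_{a₋} E[ E[ Y | A_j = a, A₋ⱼ = a₋, f((a,a₋)|X) ] ] π(a₋;α), i.e., it suffices to condition on the scalar propensity f((a,a₋)|X) rather than the full covariate X. -/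
open MeasureTheory Filter

/-- `π(a;α) = ∏_j α^{a_j}(1-α)^{1-a_j}`. -/
def bernPi (α : ℝ) {n : ℕ} (a : Fin n → Fin 2) : ℝ :=
  ∏ j, α ^ (a j : ℕ) * (1 - α) ^ (1 - (a j : ℕ))

section Aux

/-- Pull-out property at the level of set integrals: for an a.e.-bounded
`m'`-measurable `φ` and an `m'`-measurable set `s`,
`∫_s φ ⬝ E[Y|m'] = ∫_s φ ⬝ Y`. -/
lemma setInt_mul_condexp {Ω : Type*} {m' : MeasurableSpace Ω} [m0 : MeasurableSpace Ω]
    (μ : Measure Ω) [IsProbabilityMeasure μ] (hm' : m' ≤ m0)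
    {φ : Ω → ℝ} (hφ : StronglyMeasurable[m'] φ) (hφbd : ∀ᵐ ω ∂μ, |φ ω| ≤ 1)
    {s : Set Ω} (hs : MeasurableSet[m'] s)
    {Yf : Ω → ℝ} (hYint : Integrable Yf μ) :
    ∫ x in s, φ x * (μ[Yf|m']) x ∂μ = ∫ x in s, φ x * Yf x ∂μ := by
  haveI : IsFiniteMeasure (μ.trim hm') := isFiniteMeasure_trim hm'
  haveI : SigmaFinite (μ.trim hm') := inferInstance
  have hind_sm : StronglyMeasurable[m'] (s.indicator φ) := hφ.indicator hs
  have hbd' : ∀ᵐ ω ∂μ, |s.indicator φ ω| ≤ 1 := by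
    filter_upwards [hφbd] with ω h
    by_cases hω : ω ∈ s <;> simp [Set.indicator_apply, hω, abs_nonneg, h]
  have hint1 : Integrable (s.indicator φ * Yf) μ := by
    refine hYint.norm.mono'
      ((hind_sm.mono hm').aestronglyMeasurable.mul hYint.aestronglyMeasurable) ?_
    filter_upwards [hbd'] with ω h
    rw [Pi.mul_apply, norm_mul]
    exact mul_le_of_le_one_left (norm_nonneg _) (by rwa [Real.norm_eq_abs])
  calc ∫ x in s, φ x * (μ[Yf|m']) x ∂μ
      = ∫ x, s.indicator (fun x => φ x * (μ[Yf|m']) x) x ∂μ :=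
        (integral_indicator (hm' s hs)).symm
    _ = ∫ x, (s.indicator φ * (μ[Yf|m'])) x ∂μ := by
        refine integral_congr_ae (Eventually.of_forall fun x => ?_)
        simp [Set.indicator_mul_left]
    _ = ∫ x, (μ[s.indicator φ * Yf|m']) x ∂μ :=
        (integral_congr_ae (condExp_mul_of_stronglyMeasurable_left hind_sm hint1 hYint)).symm
    _ = ∫ x, (s.indicator φ * Yf) x ∂μ := integral_condExp hm'
    _ = ∫ x, s.indicator (fun x => φ x * Yf x) x ∂μ := by
        refine integral_congr_ae (Eventually.of_forall fun x => ?_)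
        simp [Set.indicator_mul_left]
    _ = ∫ x in s, φ x * Yf x ∂μ := integral_indicator (hm' s hs)

/-- Main auxiliary lemma: identification via conditioning on the propensity
score only. -/
lemma integral_condexp_div_propensity {Ω : Type*} {mX : MeasurableSpace Ω}
    [m0 : MeasurableSpace Ω] (μ : Measure Ω) [IsProbabilityMeasure μ] (hmX : mX ≤ m0)
    {D : Set Ω} (hD : MeasurableSet D)
    {Yf : Ω → ℝ} (hYint : Integrable Yf μ)
    {f : Ω → ℝ} (hfm : Measurable f)
    (hfg : f =ᵐ[μ] μ[D.indicator (fun _ => (1:ℝ)) | mX])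
    (hpos : ∀ᵐ ω ∂μ, 0 < f ω)
    (hexch : μ[fun ω => D.indicator (fun _ => (1:ℝ)) ω * Yf ω | mX]
      =ᵐ[μ] fun ω => f ω * (μ[Yf | mX]) ω) :
    ∫ ω, (μ[fun ω' => D.indicator (fun _ => (1:ℝ)) ω' * Yf ω'
          | MeasurableSpace.comap f inferInstance]) ω
        / (μ[D.indicator (fun _ => (1:ℝ)) | MeasurableSpace.comap f inferInstance]) ω ∂μ
      = ∫ ω, Yf ω ∂μ := by
  have hm : MeasurableSpace.comap f inferInstance ≤ m0 := hfm.comap_le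
  haveI : IsFiniteMeasure (μ.trim hm) := isFiniteMeasure_trim hm
  haveI : SigmaFinite (μ.trim hm) := inferInstance
  haveI : IsFiniteMeasure (μ.trim hmX) := isFiniteMeasure_trim hmX
  haveI : SigmaFinite (μ.trim hmX) := inferInstance
  have hind_int : Integrable (D.indicator fun _ => (1:ℝ)) μ :=
    (integrable_const 1).indicator hD
  -- the conditional probability is in `[0,1]` a.e.
  have hg01 : ∀ᵐ ω ∂μ, |(μ[D.indicator (fun _ => (1:ℝ)) | mX]) ω| ≤ 1 := by
    have h0 : (0 : Ω → ℝ) ≤ᵐ[μ] μ[D.indicator (fun _ => (1:ℝ)) | mX] :=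
      condExp_nonneg (Eventually.of_forall fun ω =>
        Set.indicator_nonneg (fun _ _ => zero_le_one) ω)
    have h1 : μ[D.indicator (fun _ => (1:ℝ)) | mX] ≤ᵐ[μ] μ[fun _ => (1:ℝ) | mX] :=
      condExp_mono hind_int (integrable_const 1)
        (Eventually.of_forall fun ω =>
          Set.indicator_le_self' (fun _ _ => zero_le_one) ω)
    rw [condExp_const hmX (1:ℝ)] at h1
    filter_upwards [h0, h1] with ω h0' h1'
    simp only [Pi.zero_apply] at h0'
    rw [abs_le]
    exact ⟨by linarith, h1'⟩
  have h01 : ∀ᵐ ω ∂μ, |f ω| ≤ 1 := by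
    filter_upwards [hfg, hg01] with ω he h
    rw [he]; exact h
  have hf_int : Integrable f μ :=
    (integrable_const (1:ℝ)).mono' hfm.aestronglyMeasurable
      (by filter_upwards [h01] with ω h; simpa [Real.norm_eq_abs] using h)
  have hfm_m : Measurable[MeasurableSpace.comap f inferInstance] f :=
    Measurable.of_comap_le le_rfl
  -- `σ(f)`-measurable sets coincide a.e. with `σ(X)`-measurable sets
  have hset : ∀ B : Set ℝ,
      f ⁻¹' B =ᵐ[μ] (μ[D.indicator (fun _ => (1:ℝ)) | mX]) ⁻¹' B := by
    intro B
    filter_upwards [hfg] with ω h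
    show (f ω ∈ B) = ((μ[D.indicator (fun _ => (1:ℝ)) | mX]) ω ∈ B)
    rw [h]
  have hmXg : ∀ B : Set ℝ, MeasurableSet B →
      MeasurableSet[mX] ((μ[D.indicator (fun _ => (1:ℝ)) | mX]) ⁻¹' B) :=
    fun B hB => stronglyMeasurable_condExp.measurable hB
  -- Claim A : `E[1_D | σ(f)] = f` a.e.
  have hA : f =ᵐ[μ] μ[D.indicator (fun _ => (1:ℝ)) | MeasurableSpace.comap f inferInstance] := by
    refine ae_eq_condExp_of_forall_setIntegral_eq hm hind_int
      (fun s _ _ => hf_int.integrableOn) ?_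
      hfm_m.stronglyMeasurable.aestronglyMeasurable
    rintro _ ⟨B, hB, rfl⟩ -
    calc ∫ x in f ⁻¹' B, f x ∂μ
        = ∫ x in (μ[D.indicator (fun _ => (1:ℝ)) | mX]) ⁻¹' B, f x ∂μ :=
          setIntegral_congr_set (hset B)
      _ = ∫ x in (μ[D.indicator (fun _ => (1:ℝ)) | mX]) ⁻¹' B,
            (μ[D.indicator (fun _ => (1:ℝ)) | mX]) x ∂μ :=
          integral_congr_ae (ae_restrict_of_ae hfg)
      _ = ∫ x in (μ[D.indicator (fun _ => (1:ℝ)) | mX]) ⁻¹' B,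
            D.indicator (fun _ => (1:ℝ)) x ∂μ :=
          setIntegral_condExp hmX hind_int (hmXg B hB)
      _ = ∫ x in f ⁻¹' B, D.indicator (fun _ => (1:ℝ)) x ∂μ :=
          (setIntegral_congr_set (hset B)).symm
  -- integrability facts
  have h_indY_int : Integrable (fun ω => D.indicator (fun _ => (1:ℝ)) ω * Yf ω) μ := by
    refine hYint.norm.mono'
      ((measurable_const.indicator hD).aestronglyMeasurable.mul
        hYint.aestronglyMeasurable) ?_
    refine Eventually.of_forall fun ω => ?_
    rw [norm_mul]
    refine mul_le_of_le_one_left (norm_nonneg _) ?_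
    by_cases hω : ω ∈ D <;> simp [Set.indicator_apply, hω]
  have hprod_int : Integrable
      (fun ω => f ω * (μ[Yf | MeasurableSpace.comap f inferInstance]) ω) μ := by
    have hc : Integrable (μ[Yf | MeasurableSpace.comap f inferInstance]) μ :=
      integrable_condExp
    refine hc.norm.mono' (hfm.aestronglyMeasurable.mul hc.aestronglyMeasurable) ?_
    filter_upwards [h01] with ω h
    rw [norm_mul]
    exact mul_le_of_le_one_left (norm_nonneg _) (by rwa [Real.norm_eq_abs])
  -- Claim B : `E[1_D ⬝ Y | σ(f)] = f ⬝ E[Y | σ(f)]` a.e.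
  have hB : (fun ω => f ω * (μ[Yf | MeasurableSpace.comap f inferInstance]) ω)
      =ᵐ[μ] μ[fun ω => D.indicator (fun _ => (1:ℝ)) ω * Yf ω
          | MeasurableSpace.comap f inferInstance] := by
    refine ae_eq_condExp_of_forall_setIntegral_eq hm h_indY_int
      (fun s _ _ => hprod_int.integrableOn) ?_
      (hfm_m.stronglyMeasurable.mul stronglyMeasurable_condExp).aestronglyMeasurable
    rintro _ ⟨B, hB', rfl⟩ -
    have hsm : MeasurableSet[MeasurableSpace.comap f inferInstance] (f ⁻¹' B) :=
      ⟨B, hB', rfl⟩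
    calc ∫ x in f ⁻¹' B, f x * (μ[Yf | MeasurableSpace.comap f inferInstance]) x ∂μ
        = ∫ x in f ⁻¹' B, f x * Yf x ∂μ :=
          setInt_mul_condexp μ hm hfm_m.stronglyMeasurable h01 hsm hYint
      _ = ∫ x in (μ[D.indicator (fun _ => (1:ℝ)) | mX]) ⁻¹' B, f x * Yf x ∂μ :=
          setIntegral_congr_set (hset B)
      _ = ∫ x in (μ[D.indicator (fun _ => (1:ℝ)) | mX]) ⁻¹' B,
            (μ[D.indicator (fun _ => (1:ℝ)) | mX]) x * Yf x ∂μ := by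
          refine integral_congr_ae (ae_restrict_of_ae ?_)
          filter_upwards [hfg] with ω h
          rw [h]
      _ = ∫ x in (μ[D.indicator (fun _ => (1:ℝ)) | mX]) ⁻¹' B,
            (μ[D.indicator (fun _ => (1:ℝ)) | mX]) x * (μ[Yf | mX]) x ∂μ :=
          (setInt_mul_condexp μ hmX stronglyMeasurable_condExp hg01
            (hmXg B hB') hYint).symm
      _ = ∫ x in (μ[D.indicator (fun _ => (1:ℝ)) | mX]) ⁻¹' B,
            f x * (μ[Yf | mX]) x ∂μ := by
          refine integral_congr_ae (ae_restrict_of_ae ?_)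
          filter_upwards [hfg] with ω h
          rw [h]
      _ = ∫ x in (μ[D.indicator (fun _ => (1:ℝ)) | mX]) ⁻¹' B,
            (μ[fun ω => D.indicator (fun _ => (1:ℝ)) ω * Yf ω | mX]) x ∂μ :=
          (integral_congr_ae (ae_restrict_of_ae hexch)).symm
      _ = ∫ x in (μ[D.indicator (fun _ => (1:ℝ)) | mX]) ⁻¹' B,
            D.indicator (fun _ => (1:ℝ)) x * Yf x ∂μ :=
          setIntegral_condExp hmX h_indY_int (hmXg B hB')
      _ = ∫ x in f ⁻¹' B, D.indicator (fun _ => (1:ℝ)) x * Yf x ∂μ :=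
          (setIntegral_congr_set (hset B)).symm
  -- conclude
  have hratio : (fun ω =>
      (μ[fun ω' => D.indicator (fun _ => (1:ℝ)) ω' * Yf ω'
          | MeasurableSpace.comap f inferInstance]) ω
        / (μ[D.indicator (fun _ => (1:ℝ)) | MeasurableSpace.comap f inferInstance]) ω)
      =ᵐ[μ] μ[Yf | MeasurableSpace.comap f inferInstance] := by
    filter_upwards [hA, hB, hpos] with ω h1 h2 h3
    rw [← h2, ← h1]
    exact mul_div_cancel_left₀ _ (ne_of_gt h3)
  rw [integral_congr_ae hratio, integral_condExp hm]

end Aux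

/-- Propensity-score-based identification of `μ_{aα}`: under conditional
exchangeability and positivity,
`μ_{aα} = ∑_{am} E[ E[ Y | A_j = a, A₋ⱼ = am, f((a,am)|X) ] ] π(am;α)`,
where the inner conditional expectation given the event `{A = (a,am)}` and the
scalar propensity `f((a,am)|X)` is expressed as the ratio
`E[1{A=(a,am)} Y | σ(f((a,am)|X))] / P(A=(a,am) | σ(f((a,am)|X)))`. -/
theorem propensity_score_identification
    {Ω 𝒳 : Type*} [MeasurableSpace Ω] [MeasurableSpace 𝒳]
    (μ : Measure Ω) [IsProbabilityMeasure μ]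
    (n : ℕ) (j : Fin (n + 1))
    (A : Ω → (Fin (n + 1) → Fin 2)) (hA : Measurable A)
    (X : Ω → 𝒳) (hX : Measurable X)
    (Y : (Fin (n + 1) → Fin 2) → Ω → ℝ)
    (hYmeas : ∀ a', Measurable (Y a'))
    (hYint : ∀ a', Integrable (Y a') μ)
    (fA : (Fin (n + 1) → Fin 2) → Ω → ℝ)
    (hfA : ∀ a', fA a'
      =ᵐ[μ] μ[(A ⁻¹' {a'}).indicator (fun _ => (1:ℝ)) | MeasurableSpace.comap X inferInstance])
    (hfA_meas : ∀ a', Measurable (fA a'))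
    (hpos : ∀ a', ∀ᵐ ω ∂μ, 0 < fA a' ω)
    (hexch : ∀ a' a'',
      μ[fun ω => (A ⁻¹' {a'}).indicator (fun _ => (1:ℝ)) ω * Y a'' ω
          | MeasurableSpace.comap X inferInstance]
        =ᵐ[μ] fun ω => fA a' ω *
          (μ[Y a'' | MeasurableSpace.comap X inferInstance]) ω)
    (a : Fin 2) (α : ℝ) (hα : α ∈ Set.Ioo (0:ℝ) 1) :
    ∑ am : Fin n → Fin 2, (∫ ω, Y (j.insertNth a am) ω ∂μ) * bernPi α am
      = ∑ am : Fin n → Fin 2,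
          (∫ ω,
            (μ[fun ω' => (A ⁻¹' {j.insertNth a am}).indicator (fun _ => (1:ℝ)) ω'
                  * Y (A ω') ω'
                | MeasurableSpace.comap (fA (j.insertNth a am)) inferInstance]) ω
            / (μ[(A ⁻¹' {j.insertNth a am}).indicator (fun _ => (1:ℝ))
                | MeasurableSpace.comap (fA (j.insertNth a am)) inferInstance]) ω ∂μ)
          * bernPi α am := by
  refine Finset.sum_congr rfl fun am _ => ?_
  congr 1
  set a' : Fin (n + 1) → Fin 2 := j.insertNth a am with ha'
  have hD : MeasurableSet (A ⁻¹' {a'}) := hA (measurableSet_singleton a')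
  have hYeq : (fun ω' => (A ⁻¹' {a'}).indicator (fun _ => (1:ℝ)) ω' * Y (A ω') ω')
      = fun ω' => (A ⁻¹' {a'}).indicator (fun _ => (1:ℝ)) ω' * Y a' ω' := by
    funext ω'
    by_cases h : A ω' = a'
    · simp [Set.indicator_apply, Set.mem_preimage, h]
    · simp [Set.indicator_apply, Set.mem_preimage, h]
  rw [hYeq]
  exact (integral_condexp_div_propensity μ hX.comap_le hD (hYint a') (hfA_meas a')
    (hfA a') (hpos a') (hexch a' a')).symm
end
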